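/- Strong AMC (version 1) implies strong AMC (version 3): if for every set X there is an inhabited collection family (Y_i)_{i∈I} together with surjections q_i : Y_i ↠ X, then every set X is a member of some collection family. -/
import Mathlib


/-- A surjection `p : E ↠ Y i` is refined by one of the form `q : Y i' ↠ Y i`
if there is `f : Y i' → E` with `p ∘ f = q`.  A family `(Y i)_{i ∈ I}` is a
collection family if every surjection onto some member is so refined. -/
def IsCollectionFamily {I : Type} (Y : I → Type) : Prop :=
  ∀ (i : I) (E : Type) (p : E → Y i), Function.Surjective p →
    ∃ (i' : I) (q : Y i' → Y i), Function.Surjective q ∧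
      ∃ f : Y i' → E, ∀ z, p (f z) = q z

/-- strong AMC (version 1) implies strong AMC (version 3). -/
theorem stmt_1
    (h1 : ∀ X : Type, ∃ (I : Type) (Y : I → Type),
      Nonempty I ∧ IsCollectionFamily Y ∧
      ∃ q : ∀ i, Y i → X, ∀ i, Function.Surjective (q i)) :
    ∀ X : Type, ∃ (I : Type) (Y : I → Type),
      IsCollectionFamily Y ∧ ∃ i : I, Y i = X := by
  intro X
  obtain ⟨I, Y, ⟨i₀⟩, hcoll, q, hq⟩ := h1 X
  refine ⟨Option I, fun o => o.elim X Y, ?_, none, rfl⟩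
  intro o E p hp
  cases o with
  | some i =>
      obtain ⟨i', q', hq', f, hf⟩ := hcoll i E p hp
      exact ⟨some i', q', hq', f, hf⟩
  | none =>
      -- pull back p along q i₀
      have hπ : Function.Surjective
          (fun z : {ey : E × Y i₀ // p ey.1 = q i₀ ey.2} => z.1.2) := by
        intro y
        obtain ⟨e, he⟩ := hp (q i₀ y)
        exact ⟨⟨⟨e, y⟩, he⟩, rfl⟩
      obtain ⟨i', q', hq', f, hf⟩ := hcoll i₀ _ _ hπ
      refine ⟨some i', fun z => q i₀ (q' z), (hq i₀).comp hq',
        fun z => (f z).1.1, fun z => ?_⟩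
      have h2 := (f z).2
      have h3 := hf z
      simp only at h2 h3 ⊢
      rw [h2, h3]
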